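/- arXiv:math/9905004 — 2 statements merged into one kernel-verified Lean document; each statement's English description precedes it below -/
import Mathlib

section
/- For φ(x) = x^r with r ∈ (1, ∞) and x > 0, for every integer k > 1 one has |φ^{(k)}(x) / (k! φ'(x))|^{1/(k−1)} ≤ ⌈r⌉ / x. -/
open Real

private lemma iteratedDeriv_rpow_aux (r : ℝ) :
    ∀ k : ℕ, ∀ x : ℝ, 0 < x →
      iteratedDeriv k (fun t : ℝ => t ^ r) x =
        (∏ i ∈ Finset.range k, (r - i)) * x ^ (r - k) := by
  intro k
  induction k with
  | zero => intro x hx; simp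
  | succ k ih =>
    intro x hx
    rw [iteratedDeriv_succ]
    have hev : iteratedDeriv k (fun t : ℝ => t ^ r) =ᶠ[nhds x]
        fun t => (∏ i ∈ Finset.range k, (r - i)) * t ^ (r - k) := by
      filter_upwards [IsOpen.mem_nhds isOpen_Ioi hx] with t ht
      exact ih t ht
    rw [hev.deriv_eq]
    have hd : HasDerivAt (fun t : ℝ => (∏ i ∈ Finset.range k, (r - i)) * t ^ (r - k))
        ((∏ i ∈ Finset.range k, (r - i)) * ((r - k) * x ^ (r - k - 1))) x :=
      (Real.hasDerivAt_rpow_const (Or.inl hx.ne')).const_mul _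
    rw [hd.deriv, Finset.prod_range_succ]
    push_cast
    rw [show r - ((k:ℝ) + 1) = r - (k:ℝ) - 1 by ring]
    ring

/-- Gamma-theory bound for `φ(x) = x^r`, `r > 1`: for all `k > 1` and `x > 0`,
`|φ⁽ᵏ⁾(x)/(k! φ'(x))|^{1/(k−1)} ≤ ⌈r⌉/x`. -/
theorem gamma_bound_rpow_gt_one (r : ℝ) (hr : 1 < r) (x : ℝ) (hx : 0 < x)
    (k : ℕ) (hk : 1 < k) :
    |iteratedDeriv k (fun t : ℝ => t ^ r) x /
        ((k.factorial : ℝ) * deriv (fun t : ℝ => t ^ r) x)| ^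
      ((1 : ℝ) / ((k : ℝ) - 1)) ≤ (⌈r⌉ : ℝ) / x := by
  have hr0 : (0:ℝ) < r := lt_trans one_pos hr
  have hcr : (1:ℝ) < (⌈r⌉ : ℝ) := lt_of_lt_of_le hr (Int.le_ceil r)
  have hc0 : (0:ℝ) < (⌈r⌉ : ℝ) / x := div_pos (lt_trans one_pos hcr) hx
  have hkR : (0:ℝ) < (k:ℝ) - 1 := by
    have : (1:ℝ) < (k:ℝ) := by exact_mod_cast hk
    linarith
  -- rewrite derivatives
  have hderiv : deriv (fun t : ℝ => t ^ r) x = r * x ^ (r - 1) :=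
    Real.deriv_rpow_const x r
  obtain ⟨m, hm⟩ : ∃ m : ℕ, k = m + 1 := ⟨k - 1, by omega⟩
  subst hm
  set Q : ℝ := ∏ i ∈ Finset.range m, (r - (i + 1)) with hQ
  have hP : (∏ i ∈ Finset.range (m + 1), (r - i)) = Q * r := by
    rw [Finset.prod_range_succ']
    simp [hQ]
  have hA : iteratedDeriv (m + 1) (fun t : ℝ => t ^ r) x /
        (((m + 1).factorial : ℝ) * deriv (fun t : ℝ => t ^ r) x)
      = Q / ((m + 1).factorial : ℝ) * x ^ (1 - ((m + 1 : ℕ) : ℝ)) := by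
    rw [iteratedDeriv_rpow_aux r (m + 1) x hx, hderiv, hP]
    have hx1 : (0:ℝ) < x ^ (r - 1) := Real.rpow_pos_of_pos hx _
    have hxsplit : x ^ (r - ((m + 1 : ℕ) : ℝ)) =
        x ^ (r - 1) * x ^ (1 - ((m + 1 : ℕ) : ℝ)) := by
      rw [← Real.rpow_add hx]; ring_nf
    rw [hxsplit]
    have hfac : (((m + 1).factorial : ℝ)) ≠ 0 := by positivity
    field_simp
  rw [hA]
  -- bound |Q|
  have hQbound : |Q| ≤ ((⌈r⌉ : ℝ)) ^ m * (m.factorial : ℝ) := by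
    calc |Q| ≤ ∏ i ∈ Finset.range m, |r - (i + 1)| := by
          exact le_of_eq (Finset.abs_prod _ _)
      _ ≤ ∏ i ∈ Finset.range m, ((⌈r⌉ : ℝ) * (i + 1)) := by
          apply Finset.prod_le_prod (fun i _ => abs_nonneg _)
          intro i _
          rw [abs_le]
          have h1 : r ≤ (⌈r⌉ : ℝ) := Int.le_ceil r
          have h2 : (0:ℝ) ≤ (i:ℝ) := Nat.cast_nonneg i
          constructor <;> nlinarith
      _ = ((⌈r⌉ : ℝ)) ^ m * (m.factorial : ℝ) := by
          rw [Finset.prod_mul_distrib, Finset.prod_const]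
          congr 1
          · simp [Finset.card_range]
          · push_cast [← Finset.prod_range_add_one_eq_factorial]
            norm_num
  -- main estimate
  have hfacmono : (m.factorial : ℝ) ≤ ((m + 1).factorial : ℝ) := by
    exact_mod_cast Nat.factorial_le (Nat.le_succ m)
  have hfacpos : (0:ℝ) < ((m + 1).factorial : ℝ) := by positivity
  have hxneg : (0:ℝ) < x ^ (1 - ((m + 1 : ℕ) : ℝ)) := Real.rpow_pos_of_pos hx _
  have hbound : |Q / ((m + 1).factorial : ℝ) * x ^ (1 - ((m + 1 : ℕ) : ℝ))|
      ≤ ((⌈r⌉ : ℝ) / x) ^ (((m + 1 : ℕ) : ℝ) - 1) := by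
    have hrw : ((⌈r⌉ : ℝ) / x) ^ (((m + 1 : ℕ) : ℝ) - 1)
        = (⌈r⌉ : ℝ) ^ m * x ^ (1 - ((m + 1 : ℕ) : ℝ)) := by
      rw [Real.div_rpow (by linarith) hx.le]
      rw [show (((m + 1 : ℕ) : ℝ) - 1) = (m : ℝ) by push_cast; ring]
      rw [Real.rpow_natCast]
      rw [show (1 - ((m + 1 : ℕ) : ℝ)) = -(m:ℝ) by push_cast; ring]
      rw [Real.rpow_neg hx.le, Real.rpow_natCast, div_eq_mul_inv]
    rw [hrw, abs_mul, abs_div, abs_of_pos hxneg, abs_of_pos hfacpos]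
    apply mul_le_mul_of_nonneg_right _ hxneg.le
    rw [div_le_iff₀ hfacpos]
    calc |Q| ≤ ((⌈r⌉ : ℝ)) ^ m * (m.factorial : ℝ) := hQbound
      _ ≤ (⌈r⌉ : ℝ) ^ m * ((m + 1).factorial : ℝ) := by
          apply mul_le_mul_of_nonneg_left hfacmono (by positivity)
  calc |Q / ((m + 1).factorial : ℝ) * x ^ (1 - ((m + 1 : ℕ) : ℝ))| ^
        ((1 : ℝ) / (((m + 1 : ℕ) : ℝ) - 1))
      ≤ (((⌈r⌉ : ℝ) / x) ^ (((m + 1 : ℕ) : ℝ) - 1)) ^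
          ((1 : ℝ) / (((m + 1 : ℕ) : ℝ) - 1)) := by
        apply Real.rpow_le_rpow (abs_nonneg _) hbound (by positivity)
    _ = (⌈r⌉ : ℝ) / x := by
        rw [← Real.rpow_natCast] at *
        rw [← Real.rpow_mul hc0.le]
        rw [mul_one_div, div_self hkR.ne', Real.rpow_one]
end

section
/- Let A be an n×n integer matrix with nonzero determinant, and let c₁, …, cₙ be nonzero complex numbers. Then the system of binomial equations x₁^{a_{i1}} ⋯ xₙ^{a_{in}} = c_i (i = 1, …, n) has exactly |det A| solutions in the complex torus (ℂ*)ⁿ. -/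
open Matrix

namespace BinomialCountAux

variable {n : ℕ}

private lemma zpow_sum' {G : Type*} [CommGroup G] (x : G) (s : Finset (Fin n)) (f : Fin n → ℤ) :
    x ^ (∑ i ∈ s, f i) = ∏ i ∈ s, x ^ f i := by
  classical
  induction s using Finset.induction with
  | empty => simp
  | insert _ _ h ih => simp [Finset.sum_insert h, Finset.prod_insert h, _root_.zpow_add, ih]

/-- The monomial map attached to an integer matrix. -/
def P (A : Matrix (Fin n) (Fin n) ℤ) (x : Fin n → ℂˣ) : Fin n → ℂˣ :=
  fun i => ∏ j, x j ^ A i j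

lemma P_comp (A B : Matrix (Fin n) (Fin n) ℤ) (x : Fin n → ℂˣ) :
    P (A * B) x = P A (P B x) := by
  funext i
  simp only [P]
  symm
  calc ∏ k, (∏ j, x j ^ B k j) ^ A i k
      = ∏ k, ∏ j, (x j ^ B k j) ^ A i k := by
        refine Finset.prod_congr rfl fun k _ => (Finset.prod_zpow _ _ _).symm
    _ = ∏ j, ∏ k, (x j ^ B k j) ^ A i k := Finset.prod_comm
    _ = ∏ j, x j ^ (A * B) i j := by
        refine Finset.prod_congr rfl fun j _ => ?_
        rw [Matrix.mul_apply, zpow_sum']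
        refine Finset.prod_congr rfl fun k _ => ?_
        rw [← _root_.zpow_mul, mul_comm]

lemma P_smul_one (d : ℤ) (x : Fin n → ℂˣ) :
    P (d • (1 : Matrix (Fin n) (Fin n) ℤ)) x = fun i => x i ^ d := by
  funext i
  simp only [P, Matrix.smul_apply, Matrix.one_apply, smul_eq_mul]
  rw [Finset.prod_eq_single i (fun j _ hj => by simp [Ne.symm hj]) (by simp)]
  simp

lemma exists_pow_eq (m : ℕ) (hm : 0 < m) (z : ℂˣ) : ∃ u : ℂˣ, u ^ m = z := by
  obtain ⟨w, hw⟩ := IsAlgClosed.exists_pow_nat_eq (z : ℂ) hm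
  have hw0 : w ≠ 0 := by
    rintro rfl
    rw [zero_pow hm.ne'] at hw
    exact z.ne_zero hw.symm
  refine ⟨Units.mk0 w hw0, Units.ext ?_⟩
  simpa using hw

lemma exists_zpow_eq (d : ℤ) (hd : d ≠ 0) (z : ℂˣ) : ∃ u : ℂˣ, u ^ d = z := by
  have hm : 0 < d.natAbs := Int.natAbs_pos.mpr hd
  rcases Int.natAbs_eq d with h | h
  · obtain ⟨u, hu⟩ := exists_pow_eq d.natAbs hm z
    exact ⟨u, by rw [h, zpow_natCast, hu]⟩
  · obtain ⟨u, hu⟩ := exists_pow_eq d.natAbs hm z⁻¹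
    refine ⟨u, ?_⟩
    rw [h, _root_.zpow_neg, zpow_natCast, hu, inv_inv]

lemma card_zpow_eq_one (d : ℤ) (hd : d ≠ 0) :
    Nat.card {u : ℂˣ // u ^ d = 1} = d.natAbs := by
  have : NeZero d.natAbs := ⟨Int.natAbs_ne_zero.mpr hd⟩
  have key : ∀ u : ℂˣ, u ^ d = 1 ↔ u ∈ rootsOfUnity d.natAbs ℂ := by
    intro u
    rw [mem_rootsOfUnity]
    rcases Int.natAbs_eq d with h | h
    · conv_lhs => rw [h]
      rw [zpow_natCast]
    · conv_lhs => rw [h]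
      rw [_root_.zpow_neg, zpow_natCast, inv_eq_one]
  rw [Nat.card_congr (Equiv.subtypeEquiv (Equiv.refl ℂˣ) key),
    Complex.card_rootsOfUnity]

lemma card_zsmul_eq_zero (d : ℤ) (hd : d ≠ 0) :
    Nat.card {z : Additive ℂˣ // d • z = 0} = d.natAbs := by
  rw [← card_zpow_eq_one d hd]
  refine Nat.card_congr (Equiv.subtypeEquiv Additive.toMul fun z => ?_)
  constructor
  · intro h
    have := congrArg Additive.toMul h
    simpa using this
  · intro h
    have := congrArg Additive.ofMul h
    simpa using this


variable {n : ℕ}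


lemma card_ker (A : Matrix (Fin n) (Fin n) ℤ) (hA : A.det ≠ 0) :
    Nat.card {x : Fin n → ℂˣ // ∀ i, ∏ j, x j ^ A i j = 1} = A.det.natAbs := by
  classical
  set g : (Fin n → ℤ) →ₗ[ℤ] (Fin n → ℤ) := Matrix.toLin' Aᵀ with hg
  have hginj : Function.Injective g := by
    rw [← LinearMap.ker_eq_bot, hg, Matrix.ker_toLin'_eq_bot_iff]
    intro v hv
    have h2 : (adjugate Aᵀ) *ᵥ (Aᵀ *ᵥ v) = 0 := by rw [hv, Matrix.mulVec_zero]
    rw [Matrix.mulVec_mulVec, Matrix.adjugate_mul, Matrix.smul_mulVec,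
      Matrix.one_mulVec] at h2
    have hdt : Aᵀ.det ≠ 0 := by rwa [Matrix.det_transpose]
    exact (smul_eq_zero.mp h2).resolve_left hdt
  set N : Submodule ℤ (Fin n → ℤ) := LinearMap.range g with hN
  obtain ⟨m, snf⟩ := Submodule.smithNormalForm (Pi.basisFun ℤ (Fin n)) N
  have hmn : m = n := by
    have h1 : Module.finrank ℤ N = m := by
      simpa using Module.finrank_eq_card_basis snf.bN
    have h2 : Module.finrank ℤ N = n := by
      rw [hN, LinearMap.finrank_range_of_inj hginj]
      simpa using Module.finrank_eq_card_basis (Pi.basisFun ℤ (Fin n))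
    omega
  have hnm : n = m := hmn.symm
  subst hnm
  obtain ⟨bM, bN, fe, a, hsnf⟩ := snf
  have ha : ∀ i, a i ≠ 0 := by
    intro i h
    have h0 : ((bN i : N) : Fin n → ℤ) = 0 := by rw [hsnf i, h, zero_smul]
    exact bN.ne_zero i (by simpa using h0)
  set σ : Fin n ≃ Fin n :=
    Equiv.ofBijective fe (Finite.injective_iff_bijective.mp fe.injective) with hσdef
  have hfe : ∀ j, fe j = σ j := fun _ => rfl
  -- determinant computation
  have hdet : A.det.natAbs = ∏ i, (a i).natAbs := by
    set eN : (Fin n → ℤ) ≃ₗ[ℤ] N := LinearEquiv.ofInjective g hginj with heN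
    set b0 : Module.Basis (Fin n) ℤ (Fin n → ℤ) := bN.map eN.symm with hb0
    have hgb0 : ∀ i, g (b0 i) = a i • bM (fe i) := by
      intro i
      have h1 : g (b0 i) = ((eN (b0 i) : N) : Fin n → ℤ) := rfl
      rw [h1, hb0]
      simp only [Module.Basis.map_apply]
      rw [eN.apply_symm_apply, hsnf i]
    have hD : LinearMap.toMatrix b0 bM g = (Matrix.diagonal a).submatrix σ.symm id := by
      ext k i
      rw [LinearMap.toMatrix_apply, hgb0 i, _root_.map_smul]
      simp only [Module.Basis.repr_self, Matrix.submatrix_apply, id, Finsupp.smul_apply,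
        Finsupp.single_apply, smul_eq_mul, Matrix.diagonal_apply]
      by_cases h : fe i = k
      · have h2 : σ.symm k = i := by rw [← h, hfe, Equiv.symm_apply_apply]
        simp [h, h2]
      · have h2 : ¬(σ.symm k = i) := fun hc => h (by rw [hfe, ← hc, Equiv.apply_symm_apply])
        simp [h, h2]
    have hcomp : LinearMap.toMatrix b0 b0 g =
        LinearMap.toMatrix bM b0 LinearMap.id * LinearMap.toMatrix b0 bM g := by
      rw [← LinearMap.toMatrix_comp b0 bM b0 LinearMap.id g, LinearMap.id_comp]
    have hC : IsUnit (LinearMap.toMatrix bM b0 (LinearMap.id)).det := by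
      rw [LinearMap.toMatrix_id_eq_basis_toMatrix]
      letI := Module.Basis.invertibleToMatrix b0 bM
      exact Matrix.isUnit_det_of_invertible _
    have hdet1 : (LinearMap.toMatrix b0 b0 g).det = A.det := by
      rw [LinearMap.det_toMatrix, hg, LinearMap.det_toLin', Matrix.det_transpose]
    have hDdet : ((Matrix.diagonal a).submatrix σ.symm id).det =
        (Equiv.Perm.sign σ.symm : ℤ) * ∏ i, a i := by
      rw [Matrix.det_permute, Matrix.det_diagonal]
      norm_cast
    have hfin : A.det = (LinearMap.toMatrix bM b0 (LinearMap.id)).det *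
        ((Equiv.Perm.sign σ.symm : ℤ) * ∏ i, a i) := by
      rw [← hdet1, hcomp, Matrix.det_mul, hD, hDdet]
    rw [hfin, Int.natAbs_mul, Int.natAbs_mul, Int.natAbs_of_isUnit hC, Int.units_natAbs,
      one_mul, one_mul]
    exact map_prod Int.natAbsHom a Finset.univ
  -- duality
  set E := (Pi.basisFun ℤ (Fin n)).constr (M' := Additive ℂˣ) ℤ with hE
  have hEapp : ∀ (y : Fin n → Additive ℂˣ) (v : Fin n → ℤ), E y v = ∑ j, v j • y j := by
    intro y v
    rw [hE, Module.Basis.constr_apply_fintype]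
    simp
  have hcond : ∀ (x : Fin n → ℂˣ) (i : Fin n),
      (∏ j, x j ^ A i j = 1) ↔ (∑ j, A i j • Additive.ofMul (x j)) = 0 := by
    intro x i
    have h1 : (∑ j, A i j • Additive.ofMul (x j)) = Additive.ofMul (∏ j, x j ^ A i j) := by
      rw [ofMul_prod]
      exact Finset.sum_congr rfl fun j _ => (ofMul_zpow _ _).symm
    rw [h1]
    exact ⟨fun h => by simp [h], fun h => by simpa using congrArg Additive.toMul h⟩
  have step1 : Nat.card {x : Fin n → ℂˣ // ∀ i, ∏ j, x j ^ A i j = 1}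
      = Nat.card {y : Fin n → Additive ℂˣ // ∀ i, (∑ j, A i j • y j) = 0} := by
    refine Nat.card_congr
      (Equiv.subtypeEquiv (Equiv.piCongrRight fun _ => Additive.ofMul) fun x => ?_)
    refine forall_congr' fun i => ?_
    simpa using hcond x i
  have hNspan : N = Submodule.span ℤ (Set.range A) := by
    rw [hN, hg, Matrix.range_toLin']
    rfl
  have step2cond : ∀ (y : Fin n → Additive ℂˣ),
      (∀ i, (∑ j, A i j • y j) = 0) ↔ (∀ v ∈ N, E y v = 0) := by
    intro y
    have h1 : (∀ v ∈ N, E y v = 0) ↔ N ≤ LinearMap.ker (E y) := by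
      constructor
      · intro h v hv
        exact LinearMap.mem_ker.mpr (h v hv)
      · intro h v hv
        exact LinearMap.mem_ker.mp (h hv)
    rw [h1, hNspan, Submodule.span_le]
    constructor
    · rintro h _ ⟨i, rfl⟩
      refine LinearMap.mem_ker.mpr ?_
      rw [hEapp]
      exact h i
    · intro h i
      have h2 := h ⟨i, rfl⟩
      rw [← hEapp y (A i)]
      exact LinearMap.mem_ker.mp h2
  have step2 : Nat.card {y : Fin n → Additive ℂˣ // ∀ i, (∑ j, A i j • y j) = 0}
      = Nat.card {h : (Fin n → ℤ) →ₗ[ℤ] Additive ℂˣ // ∀ v ∈ N, h v = 0} :=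
    Nat.card_congr (Equiv.subtypeEquiv E.toEquiv fun y => step2cond y)
  have step3cond : ∀ (w : Fin n → Additive ℂˣ),
      (∀ i, a i • w (σ i) = 0) ↔
        (∀ v ∈ N, (bM.constr (M' := Additive ℂˣ) ℤ w) v = 0) := by
    intro w
    constructor
    · intro h v hv
      set h' := bM.constr (M' := Additive ℂˣ) ℤ w with hh'
      show h' v = 0
      have hv' : v = ((⟨v, hv⟩ : N) : Fin n → ℤ) := rfl
      rw [hv']
      conv_lhs => rw [← bN.sum_repr ⟨v, hv⟩]
      rw [Submodule.coe_sum, map_sum]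
      simp only [Submodule.coe_smul]
      refine Finset.sum_eq_zero fun i _ => ?_
      have h3 : h' ((bN i : N) : Fin n → ℤ) = 0 := by
        rw [hsnf i, _root_.map_smul, Module.Basis.constr_basis]
        exact h i
      rw [_root_.map_smul, h3, smul_zero]
    · intro h i
      have h2 := h _ (bN i : N).2
      rw [hsnf i, _root_.map_smul, Module.Basis.constr_basis] at h2
      exact h2
  have step3 : Nat.card {h : (Fin n → ℤ) →ₗ[ℤ] Additive ℂˣ // ∀ v ∈ N, h v = 0}
      = Nat.card {w : Fin n → Additive ℂˣ // ∀ i, a i • w (σ i) = 0} :=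
    (Nat.card_congr (Equiv.subtypeEquiv
      (bM.constr (M' := Additive ℂˣ) ℤ).toEquiv fun w => step3cond w)).symm
  have step4 : Nat.card {w : Fin n → Additive ℂˣ // ∀ i, a i • w (σ i) = 0}
      = ∏ i, Nat.card {z : Additive ℂˣ // a i • z = 0} := by
    rw [← Nat.card_pi]
    refine Nat.card_congr
      ⟨fun w i => ⟨w.1 (σ i), w.2 i⟩,
       fun z => ⟨fun j => (z (σ.symm j)).1, fun i => by
        show a i • (z (σ.symm (σ i))).1 = 0
        rw [Equiv.symm_apply_apply]
        exact (z i).2⟩, ?_, ?_⟩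
    · intro w
      refine Subtype.ext (funext fun j => ?_)
      show w.1 (σ (σ.symm j)) = w.1 j
      rw [Equiv.apply_symm_apply]
    · intro z
      funext i
      refine Subtype.ext ?_
      show (z (σ.symm (σ i))).1 = (z i).1
      rw [Equiv.symm_apply_apply]
  calc Nat.card {x : Fin n → ℂˣ // ∀ i, ∏ j, x j ^ A i j = 1}
      = ∏ i, Nat.card {z : Additive ℂˣ // a i • z = 0} := by
        rw [step1, step2, step3, step4]
    _ = ∏ i, (a i).natAbs := Finset.prod_congr rfl fun i _ =>
        card_zsmul_eq_zero (a i) (ha i)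
    _ = A.det.natAbs := hdet.symm


end BinomialCountAux

open BinomialCountAux in
/-- A binomial system `∏ⱼ xⱼ^{aᵢⱼ} = cᵢ` with integer exponent matrix `A` of
nonzero determinant and nonzero constants `cᵢ` has exactly `|det A|` solutions
in the complex torus `(ℂ*)ⁿ`. -/
theorem binomial_system_torus_count (n : ℕ)
    (A : Matrix (Fin n) (Fin n) ℤ) (hA : A.det ≠ 0) (c : Fin n → ℂˣ) :
    {x : Fin n → ℂˣ | ∀ i, ∏ j, x j ^ A i j = c i}.ncard = A.det.natAbs := by
  classical
  choose y hy using fun i => exists_zpow_eq A.det hA (c i)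
  set x₀ : Fin n → ℂˣ := P (adjugate A) y with hx₀
  have hPx₀ : P A x₀ = c := by
    rw [hx₀, ← P_comp, Matrix.mul_adjugate, P_smul_one]
    funext i
    exact hy i
  have hmem : ∀ x : Fin n → ℂˣ, (∀ i, ∏ j, x j ^ A i j = 1) ↔
      (Equiv.mulLeft x₀) x ∈ {x : Fin n → ℂˣ | ∀ i, ∏ j, x j ^ A i j = c i} := by
    intro x
    simp only [Equiv.coe_mulLeft, Set.mem_setOf_eq]
    refine forall_congr' fun i => ?_
    have h1 : (∏ j, (x₀ * x) j ^ A i j) = P A x₀ i * (∏ j, x j ^ A i j) := by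
      simp [P, Pi.mul_apply, mul_zpow, Finset.prod_mul_distrib]
    rw [h1, hPx₀]
    exact (mul_eq_left (a := c i)).symm
  rw [← Nat.card_coe_set_eq, ← card_ker A hA]
  exact (Nat.card_congr (Equiv.subtypeEquiv (Equiv.mulLeft x₀) hmem)).symm
end
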